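/- Let Γ be a finite group and let {Γ₁} ∪ 𝒜 be a nontrivial Frobenius partition of Γ. Then Γ₁ is a nontrivial subgroup of Γ (Γ₁ ≠ {1}). -/

import Mathlib

/-- The conjugate subgroup `g⁻¹ A g` of a subgroup `A`. -/
def ConjSubgroup {Γ : Type*} [Group Γ] (g : Γ) (A : Subgroup Γ) : Subgroup Γ :=
  Subgroup.map (MulAut.conj g⁻¹).toMonoidHom A

/-- A subgroup `A` is malnormal if for every `g ∉ A` the intersection `A ∩ g⁻¹Ag` is trivial. -/
def Malnormal {Γ : Type*} [Group Γ] (A : Subgroup Γ) : Prop :=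
  ∀ g : Γ, g ∉ A → A ⊓ ConjSubgroup g A = ⊥

/-- A collection of subgroups is a partition of the group if every non-identity element
lies in exactly one subgroup of the collection. -/
def IsGroupPartition {Γ : Type*} [Group Γ] (P : Set (Subgroup Γ)) : Prop :=
  ∀ x : Γ, x ≠ 1 → ∃! A : Subgroup Γ, A ∈ P ∧ x ∈ A

/-- `{Γ₁} ∪ 𝒜` is a Frobenius partition of `Γ` if it is a partition of `Γ`, `Γ₁` is normal,
every `A ∈ 𝒜` is malnormal, and `𝒜` is closed under conjugation. -/
structure IsFrobeniusPartition {Γ : Type*} [Group Γ] (Γ₁ : Subgroup Γ)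
    (𝒜 : Set (Subgroup Γ)) : Prop where
  normal : Γ₁.Normal
  partition : IsGroupPartition (insert Γ₁ 𝒜)
  malnormal : ∀ A ∈ 𝒜, Malnormal A
  conj_mem : ∀ A ∈ 𝒜, ∀ g : Γ, ConjSubgroup g A ∈ 𝒜

/-- A partition is nontrivial if it contains at least two nontrivial subgroups. -/
def NontrivialGroupPartition {Γ : Type*} [Group Γ] (P : Set (Subgroup Γ)) : Prop :=
  ∃ A ∈ P, ∃ B ∈ P, A ≠ B ∧ A ≠ ⊥ ∧ B ≠ ⊥

section Helpers
variable {Γ : Type*} [Group Γ]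

lemma mem_conjSubgroup {g x : Γ} {A : Subgroup Γ} :
    x ∈ ConjSubgroup g A ↔ g * x * g⁻¹ ∈ A := by
  constructor
  · rintro ⟨a, ha, rfl⟩
    simp only [MulEquiv.coe_toMonoidHom, MulAut.conj_apply, SetLike.mem_coe] at ha ⊢
    convert ha using 1
    group
  · intro h
    exact ⟨g * x * g⁻¹, h, by simp only [MulEquiv.coe_toMonoidHom, MulAut.conj_apply]; group⟩

lemma conjSubgroup_one (A : Subgroup Γ) : ConjSubgroup 1 A = A := by
  ext x; simp [mem_conjSubgroup]

lemma conjSubgroup_conjSubgroup (k h : Γ) (A : Subgroup Γ) :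
    ConjSubgroup k (ConjSubgroup h A) = ConjSubgroup (h * k) A := by
  ext x
  simp only [mem_conjSubgroup]
  constructor
  · intro hx; convert hx using 1; group
  · intro hx; convert hx using 1; group

lemma conj_eq_conj {g h : Γ} {A : Subgroup Γ}
    (heq : ConjSubgroup g A = ConjSubgroup h A) : ConjSubgroup (h * g⁻¹) A = A := by
  ext y
  have := Subgroup.ext_iff.mp heq (g⁻¹ * y * g)
  simp only [mem_conjSubgroup] at this ⊢
  have e : ∀ y : Γ, g * (g⁻¹ * y * g) * g⁻¹ = y := by intro y; group
  have e2 : ∀ y : Γ, h * (g⁻¹ * y * g) * h⁻¹ = h * g⁻¹ * y * (h * g⁻¹)⁻¹ := by intro y; group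
  rw [e, e2] at this
  exact this.symm

lemma malnormal_mem {A : Subgroup Γ} (hm : Malnormal A) (hbot : A ≠ ⊥) {g : Γ}
    (h : ConjSubgroup g A = A) : g ∈ A := by
  by_contra hg
  have := hm g hg
  rw [h, inf_idem] at this
  exact hbot this

lemma part_unique {P : Set (Subgroup Γ)} (hP : IsGroupPartition P) {x : Γ} (hx : x ≠ 1)
    {A B : Subgroup Γ} (hA : A ∈ P) (hB : B ∈ P) (hxA : x ∈ A) (hxB : x ∈ B) : A = B := by
  obtain ⟨C, _, hu⟩ := hP x hx
  rw [hu A ⟨hA, hxA⟩, hu B ⟨hB, hxB⟩]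

lemma mem_conj_iff_coset {Γ₁ : Subgroup Γ} {𝒜 : Set (Subgroup Γ)}
    (hF : IsFrobeniusPartition Γ₁ 𝒜) {A : Subgroup Γ} (hA : A ∈ 𝒜) (hAbot : A ≠ ⊥)
    {x g₀ : Γ} (hx : x ≠ 1) (hx0 : x ∈ ConjSubgroup g₀ A) (g : Γ) :
    x ∈ ConjSubgroup g A ↔ g * g₀⁻¹ ∈ A := by
  constructor
  · intro hxg
    have heq : ConjSubgroup g A = ConjSubgroup g₀ A :=
      part_unique hF.partition hx (Set.mem_insert_of_mem _ (hF.conj_mem A hA g))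
        (Set.mem_insert_of_mem _ (hF.conj_mem A hA g₀)) hxg hx0
    have := malnormal_mem (hF.malnormal A hA) hAbot (conj_eq_conj heq)
    have h2 : (g₀ * g⁻¹)⁻¹ ∈ A := inv_mem this
    simpa using h2
  · intro ha
    rw [mem_conjSubgroup]
    have h0 : g₀ * x * g₀⁻¹ ∈ A := mem_conjSubgroup.mp hx0
    have e : g * x * g⁻¹ = (g * g₀⁻¹) * (g₀ * x * g₀⁻¹) * (g * g₀⁻¹)⁻¹ := by group
    rw [e]
    exact A.mul_mem (A.mul_mem ha h0) (inv_mem ha)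
end Helpers

open scoped Classical

section Counting
variable {Γ : Type*} [Group Γ] [Fintype Γ]

lemma card_filter_mem (A : Subgroup Γ) :
    (Finset.univ.filter (fun x : Γ => x ∈ A)).card = Nat.card A := by
  rw [Nat.card_eq_fintype_card, Fintype.card_subtype]

lemma card_filter_mem_ne_one (A : Subgroup Γ) :
    (Finset.univ.filter (fun x : Γ => x ∈ A ∧ x ≠ 1)).card = Nat.card A - 1 := by
  have h : Finset.univ.filter (fun x : Γ => x ∈ A ∧ x ≠ 1)
      = (Finset.univ.filter (fun x : Γ => x ∈ A)).erase 1 := by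
    ext x
    simp [Finset.mem_erase, and_comm]
  rw [h, Finset.card_erase_of_mem (by simp [A.one_mem]), card_filter_mem]

lemma card_filter_mem_conj_ne_one (A : Subgroup Γ) (g : Γ) :
    (Finset.univ.filter (fun x : Γ => x ∈ ConjSubgroup g A ∧ x ≠ 1)).card
      = Nat.card A - 1 := by
  rw [← card_filter_mem_ne_one A]
  apply Finset.card_nbij' (fun x => g * x * g⁻¹) (fun y => g⁻¹ * y * g)
  · intro x hx
    simp only [Finset.mem_coe, Finset.mem_filter, Finset.mem_univ, true_and] at hx ⊢
    refine ⟨mem_conjSubgroup.mp hx.1, ?_⟩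
    intro h
    apply hx.2
    have : g⁻¹ * (g * x * g⁻¹) * g = g⁻¹ * 1 * g := by rw [h]
    simpa [mul_assoc] using this
  · intro y hy
    simp only [Finset.mem_coe, Finset.mem_filter, Finset.mem_univ, true_and] at hy ⊢
    constructor
    · rw [mem_conjSubgroup]
      have e : g * (g⁻¹ * y * g) * g⁻¹ = y := by group
      rw [e]; exact hy.1
    · intro h
      apply hy.2
      have : g * (g⁻¹ * y * g) * g⁻¹ = g * 1 * g⁻¹ := by rw [h]
      simpa [mul_assoc] using this
  · intro x _; group
  · intro y _; group

lemma card_filter_coset (A : Subgroup Γ) (g₀ : Γ) :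
    (Finset.univ.filter (fun g : Γ => g * g₀⁻¹ ∈ A)).card = Nat.card A := by
  rw [← card_filter_mem A]
  apply Finset.card_nbij' (fun g => g * g₀⁻¹) (fun a => a * g₀)
  · intro x hx
    simp only [Finset.mem_coe, Finset.mem_filter, Finset.mem_univ, true_and] at hx ⊢
    exact hx
  · intro y hy
    simp only [Finset.mem_coe, Finset.mem_filter, Finset.mem_univ, true_and] at hy ⊢
    simpa [mul_assoc] using hy
  · intro x _; group
  · intro y _; group

lemma card_union_conj {Γ₁ : Subgroup Γ} {𝒜 : Set (Subgroup Γ)}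
    (hF : IsFrobeniusPartition Γ₁ 𝒜) {A : Subgroup Γ} (hA : A ∈ 𝒜) (hAbot : A ≠ ⊥) :
    (Finset.univ.filter (fun x : Γ => x ≠ 1 ∧ ∃ g : Γ, x ∈ ConjSubgroup g A)).card + A.index
      = Nat.card Γ := by
  set S := Finset.univ.filter (fun x : Γ => x ≠ 1 ∧ ∃ g : Γ, x ∈ ConjSubgroup g A) with hS
  set s : Finset (Γ × Γ) :=
    Finset.univ.filter (fun p : Γ × Γ => p.2 ∈ ConjSubgroup p.1 A ∧ p.2 ≠ 1) with hsdef
  have ha2 : 1 < Nat.card A := (Subgroup.one_lt_card_iff_ne_bot A).mpr hAbot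
  have h1 : s.card = Fintype.card Γ * (Nat.card A - 1) := by
    rw [Finset.card_eq_sum_card_fiberwise (f := Prod.fst) (t := Finset.univ)
      (fun x _ => Finset.mem_univ _)]
    rw [Finset.sum_congr rfl (fun g _ => ?_), Finset.sum_const, Finset.card_univ,
      smul_eq_mul]
    rw [← card_filter_mem_conj_ne_one A g]
    apply Finset.card_nbij' (fun p => p.2) (fun x => (g, x))
    · intro p hp
      simp only [hsdef, Finset.mem_coe, Finset.mem_filter, Finset.mem_univ, true_and] at hp ⊢
      obtain ⟨⟨h1, h2⟩, h3⟩ := hp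
      rw [h3] at h1
      exact ⟨h1, h2⟩
    · intro x hx
      simp only [hsdef, Finset.mem_coe, Finset.mem_filter, Finset.mem_univ, true_and] at hx ⊢
      exact ⟨⟨hx.1, hx.2⟩, trivial⟩
    · intro p hp
      simp only [hsdef, Finset.mem_coe, Finset.mem_filter, Finset.mem_univ, true_and] at hp
      rw [← hp.2]
    · intro x _; rfl
  have h2 : s.card = S.card * Nat.card A := by
    rw [Finset.card_eq_sum_card_fiberwise (f := Prod.snd) (t := Finset.univ)
      (fun x _ => Finset.mem_univ _)]
    rw [← Finset.sum_subset (Finset.subset_univ S) (fun x _ hx => ?_)]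
    · rw [Finset.sum_congr rfl (fun x hx => ?_), Finset.sum_const, smul_eq_mul]
      simp only [hS, Finset.mem_filter, Finset.mem_univ, true_and] at hx
      obtain ⟨hx1, g₀, hg₀⟩ := hx
      rw [← card_filter_coset A g₀]
      apply Finset.card_nbij' (fun p => p.1) (fun g => (g, x))
      · intro p hp
        simp only [hsdef, Finset.mem_coe, Finset.mem_filter, Finset.mem_univ, true_and] at hp ⊢
        obtain ⟨⟨h1, h2⟩, h3⟩ := hp
        rw [h3] at h1
        exact (mem_conj_iff_coset hF hA hAbot hx1 hg₀ p.1).mp h1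
      · intro g hg
        simp only [hsdef, Finset.mem_coe, Finset.mem_filter, Finset.mem_univ, true_and] at hg ⊢
        exact ⟨⟨(mem_conj_iff_coset hF hA hAbot hx1 hg₀ g).mpr hg, hx1⟩, trivial⟩
      · intro p hp
        simp only [hsdef, Finset.mem_coe, Finset.mem_filter, Finset.mem_univ, true_and] at hp
        rw [← hp.2]
      · intro g _; rfl
    · rw [Finset.card_eq_zero, Finset.eq_empty_iff_forall_notMem]
      intro p hp
      simp only [hsdef, Finset.mem_filter, Finset.mem_univ, true_and] at hp
      obtain ⟨⟨hp1, hp2⟩, hp3⟩ := hp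
      apply hx
      simp only [hS, Finset.mem_filter, Finset.mem_univ, true_and]
      exact ⟨by rw [← hp3]; exact hp2, p.1, by rw [← hp3]; exact hp1⟩
  have hn : Nat.card A * A.index = Nat.card Γ := Subgroup.card_mul_index A
  have hcΓ : Fintype.card Γ = Nat.card Γ := (Nat.card_eq_fintype_card).symm
  rw [h2, hcΓ, ← hn] at h1
  have hpos : 0 < Nat.card A := by omega
  have key : S.card = A.index * (Nat.card A - 1) := by
    apply Nat.eq_of_mul_eq_mul_right hpos
    rw [h1]; ring
  have : S.card + A.index = Nat.card A * A.index := by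
    rw [key]
    have e : Nat.card A - 1 + 1 = Nat.card A := by omega
    calc A.index * (Nat.card A - 1) + A.index = A.index * ((Nat.card A - 1) + 1) := by ring
    _ = A.index * Nat.card A := by rw [e]
    _ = Nat.card A * A.index := by ring
  rw [this, hn]
end Counting

/-- For a nontrivial Frobenius partition `{Γ₁} ∪ 𝒜` of a finite group `Γ`, the normal
subgroup `Γ₁` is nontrivial. -/
theorem kernel_nontrivial {Γ : Type*} [Group Γ] [Finite Γ]
    (Γ₁ : Subgroup Γ) (𝒜 : Set (Subgroup Γ)) (hF : IsFrobeniusPartition Γ₁ 𝒜)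
    (hnt : NontrivialGroupPartition (insert Γ₁ 𝒜)) :
    Γ₁ ≠ ⊥ := by
  cases nonempty_fintype Γ
  intro hbot
  obtain ⟨A, hAP, B, hBP, hAB, hA0, hB0⟩ := hnt
  have hmem : ∀ {D : Subgroup Γ}, D ∈ insert Γ₁ 𝒜 → D ≠ ⊥ → D ∈ 𝒜 := by
    intro D hD hD0
    rcases hD with h | h
    · rw [h, hbot] at hD0; exact absurd rfl hD0
    · exact h
  have hA𝒜 : A ∈ 𝒜 := hmem hAP hA0
  have hB𝒜 : B ∈ 𝒜 := hmem hBP hB0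
  have exists_ne_one : ∀ {D : Subgroup Γ}, D ≠ ⊥ → ∃ d : Γ, d ∈ D ∧ d ≠ 1 := by
    intro D hD
    obtain ⟨⟨d, hd⟩, hd1⟩ := Subgroup.ne_bot_iff_exists_ne_one.mp hD
    exact ⟨d, hd, by simpa [Subtype.ext_iff] using hd1⟩
  -- A ≠ ⊤
  have hAtop : A ≠ ⊤ := by
    intro htop
    obtain ⟨b, hbB, hb1⟩ := exists_ne_one hB0
    exact hAB (part_unique hF.partition hb1 hAP hBP (htop ▸ Subgroup.mem_top b) hbB)
  have hkA : 2 ≤ A.index := by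
    have h1 : A.index ≠ 1 := fun h => hAtop (Subgroup.index_eq_one.mp h)
    have h0 : A.index ≠ 0 := Subgroup.index_ne_zero_of_finite
    omega
  have hSA := card_union_conj hF hA𝒜 hA0
  set SA := Finset.univ.filter (fun x : Γ => x ≠ 1 ∧ ∃ g : Γ, x ∈ ConjSubgroup g A) with hSAdef
  have hcΓ : Nat.card Γ = Fintype.card Γ := Nat.card_eq_fintype_card
  have hne : 1 ≤ Fintype.card Γ := Fintype.card_pos
  -- find x outside all conjugates of A
  have hex : ∃ x ∈ Finset.univ.erase (1 : Γ), x ∉ SA := by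
    by_contra h
    push_neg at h
    have hsub : Finset.univ.erase (1 : Γ) ⊆ SA := fun x hx => h x hx
    have hle := Finset.card_le_card hsub
    rw [Finset.card_erase_of_mem (Finset.mem_univ 1), Finset.card_univ] at hle
    omega
  obtain ⟨x, hx1, hxSA⟩ := hex
  have hx1' : x ≠ 1 := (Finset.mem_erase.mp hx1).1
  have hxSA' : ∀ g : Γ, x ∉ ConjSubgroup g A := by
    intro g hg
    apply hxSA
    simp only [hSAdef, Finset.mem_filter, Finset.mem_univ, true_and]
    exact ⟨hx1', g, hg⟩
  obtain ⟨C, ⟨hCP, hxC⟩, -⟩ := hF.partition x hx1'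
  have hC0 : C ≠ ⊥ := by
    intro h
    rw [h] at hxC
    exact hx1' (Subgroup.mem_bot.mp hxC)
  have hC𝒜 : C ∈ 𝒜 := hmem hCP hC0
  have hCtop : C ≠ ⊤ := by
    intro htop
    obtain ⟨a, haA, ha1⟩ := exists_ne_one hA0
    have hAC : A = C := part_unique hF.partition ha1 hAP hCP haA (htop ▸ Subgroup.mem_top a)
    apply hxSA' 1
    rw [conjSubgroup_one, hAC]
    exact hxC
  have hkC : 2 ≤ C.index := by
    have h1 : C.index ≠ 1 := fun h => hCtop (Subgroup.index_eq_one.mp h)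
    have h0 : C.index ≠ 0 := Subgroup.index_ne_zero_of_finite
    omega
  have hSC := card_union_conj hF hC𝒜 hC0
  set SC := Finset.univ.filter (fun x : Γ => x ≠ 1 ∧ ∃ g : Γ, x ∈ ConjSubgroup g C) with hSCdef
  -- 2 * index bounds
  have ha2 : 2 ≤ Nat.card A := (Subgroup.one_lt_card_iff_ne_bot A).mpr hA0
  have hc2 : 2 ≤ Nat.card C := (Subgroup.one_lt_card_iff_ne_bot C).mpr hC0
  have hbA : 2 * A.index ≤ Nat.card Γ := by
    calc 2 * A.index ≤ Nat.card A * A.index := Nat.mul_le_mul_right _ ha2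
    _ = Nat.card Γ := Subgroup.card_mul_index A
  have hbC : 2 * C.index ≤ Nat.card Γ := by
    calc 2 * C.index ≤ Nat.card C * C.index := Nat.mul_le_mul_right _ hc2
    _ = Nat.card Γ := Subgroup.card_mul_index C
  -- disjointness
  have hdisj : Disjoint SA SC := by
    rw [Finset.disjoint_left]
    intro y hySA hySC
    simp only [hSAdef, Finset.mem_filter, Finset.mem_univ, true_and] at hySA
    simp only [hSCdef, Finset.mem_filter, Finset.mem_univ, true_and] at hySC
    obtain ⟨hy1, g, hyg⟩ := hySA
    obtain ⟨-, h, hyh⟩ := hySC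
    have heq : ConjSubgroup g A = ConjSubgroup h C :=
      part_unique hF.partition hy1 (Set.mem_insert_of_mem _ (hF.conj_mem A hA𝒜 g))
        (Set.mem_insert_of_mem _ (hF.conj_mem C hC𝒜 h)) hyg hyh
    have hCeq : C = ConjSubgroup (g * h⁻¹) A := by
      have := congrArg (ConjSubgroup h⁻¹) heq
      rw [conjSubgroup_conjSubgroup, conjSubgroup_conjSubgroup, mul_inv_cancel,
        conjSubgroup_one] at this
      exact this.symm
    exact hxSA' (g * h⁻¹) (hCeq ▸ hxC)
  -- final count
  have hunion : SA.card + SC.card ≤ Fintype.card Γ - 1 := by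
    rw [← Finset.card_union_of_disjoint hdisj]
    have hsub : SA ∪ SC ⊆ Finset.univ.erase (1 : Γ) := by
      intro y hy
      rcases Finset.mem_union.mp hy with h | h
      · simp only [hSAdef, Finset.mem_filter, Finset.mem_univ, true_and] at h
        exact Finset.mem_erase.mpr ⟨h.1, Finset.mem_univ y⟩
      · simp only [hSCdef, Finset.mem_filter, Finset.mem_univ, true_and] at h
        exact Finset.mem_erase.mpr ⟨h.1, Finset.mem_univ y⟩
    have := Finset.card_le_card hsub
    rwa [Finset.card_erase_of_mem (Finset.mem_univ 1), Finset.card_univ] at this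
  omega
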